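/- arXiv:1910.01233 — 2 statements merged into one kernel-verified Lean document; each statement's English description precedes it below -/
import Mathlib

section
/- If U = [[U₁₁, U₁₂],[U₂₁, U₂₂]] is a block unitary matrix with square diagonal blocks of sizes n and m, then the nonzero singular values of U₁₂ coincide with those of U₂₁, and σᵢ(U₁₁)² + σ_{n+1−i}(U₁₂)² = 1 for all appropriate indices; in particular ‖U₁₂‖² = 1 − σ_min(U₁₁)². -/
open Matrix

/-- Operator (spectral) norm of a complex matrix: the norm of the induced map
between Euclidean spaces. -/
noncomputable def opNorm {m n : ℕ} (A : Matrix (Fin m) (Fin n) ℂ) : ℝ :=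
  ‖LinearMap.toContinuousLinearMap (Matrix.toEuclideanLin A)‖

/-- Singular values of a square complex matrix sorted decreasingly:
square roots of the eigenvalues of `Aᴴ * A`, sorted with `≥`. -/
noncomputable def sortedSingularValues {n : ℕ} (A : Matrix (Fin n) (Fin n) ℂ) : Fin n → ℝ :=
  fun i =>
    ((Finset.univ.val.map fun j =>
        Real.sqrt ((Matrix.isHermitian_conjTranspose_mul_self A).eigenvalues j)).sort (· ≥ ·)).get
      ⟨i, by simp⟩

/-- Singular values of a rectangular complex matrix, indexed by rows and sorted
decreasingly: square roots of the eigenvalues of `A * Aᴴ`. -/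
noncomputable def sortedSingularValuesRect {m n : ℕ} (A : Matrix (Fin m) (Fin n) ℂ) : Fin m → ℝ :=
  fun i =>
    ((Finset.univ.val.map fun j =>
        Real.sqrt ((Matrix.isHermitian_mul_conjTranspose_self A).eigenvalues j)).sort (· ≥ ·)).get
      ⟨i, by simp⟩

/-- Multiset of singular values of a rectangular complex matrix (square roots
of the eigenvalues of `A * Aᴴ`). -/
noncomputable def singularValueMultiset {m n : ℕ} (A : Matrix (Fin m) (Fin n) ℂ) : Multiset ℝ :=
  Finset.univ.val.map fun j =>
    Real.sqrt ((Matrix.isHermitian_mul_conjTranspose_self A).eigenvalues j)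

/-! ### Auxiliary lemmas -/

section Aux

open Polynomial
open scoped Matrix.Norms.L2Operator

variable {k l : Type*} [Fintype k] [DecidableEq k] [Fintype l] [DecidableEq l]

lemma my_eval_charpoly (M : Matrix k k ℂ) (x : ℂ) :
    M.charpoly.eval x = (x • (1 : Matrix k k ℂ) - M).det := by
  have h : (Polynomial.evalRingHom x) M.charpoly
      = (((Polynomial.evalRingHom x)).mapMatrix (charmatrix M)).det := by
    rw [Matrix.charpoly, RingHom.map_det]
  have h2 : ((Polynomial.evalRingHom x)).mapMatrix (charmatrix M)
      = x • (1 : Matrix k k ℂ) - M := by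
    ext i j
    by_cases hij : i = j
    · subst hij
      simp [charmatrix_apply, Matrix.one_apply, Matrix.smul_apply]
    · simp [charmatrix_apply, Matrix.one_apply, hij, Matrix.smul_apply,
        Matrix.diagonal_apply_ne _ hij]
  simpa [h2] using h

lemma my_charpoly_mul_comm (A : Matrix k l ℂ) (B : Matrix l k ℂ) :
    (A * B).charpoly * X ^ (Fintype.card l) = (B * A).charpoly * X ^ (Fintype.card k) := by
  apply eq_of_infinite_eval_eq
  refine Set.Infinite.mono ?_ (Set.Finite.infinite_compl (Set.finite_singleton (0:ℂ)))
  intro x hx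
  have hx0 : x ≠ 0 := hx
  show eval x _ = eval x _
  have h1 : x • (1 : Matrix k k ℂ) - A * B = x • ((1 : Matrix k k ℂ) - A * (x⁻¹ • B)) := by
    rw [Matrix.mul_smul, smul_sub, smul_smul, mul_inv_cancel₀ hx0, one_smul]
  have h2 : x • (1 : Matrix l l ℂ) - B * A = x • ((1 : Matrix l l ℂ) - (x⁻¹ • B) * A) := by
    rw [Matrix.smul_mul, smul_sub, smul_smul, mul_inv_cancel₀ hx0, one_smul]
  simp only [eval_mul, eval_pow, eval_X, my_eval_charpoly, h1, h2, Matrix.det_smul]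
  rw [Matrix.det_one_sub_mul_comm]
  ring

lemma my_charpoly_sq_comm (A B : Matrix k k ℂ) : (A * B).charpoly = (B * A).charpoly :=
  mul_right_cancel₀ (pow_ne_zero _ X_ne_zero) (my_charpoly_mul_comm A B)

lemma my_charpoly_unitary_conj (V : Matrix.unitaryGroup k ℂ) (D : Matrix k k ℂ) :
    ((V : Matrix k k ℂ) * D * star (V : Matrix k k ℂ)).charpoly = D.charpoly := by
  rw [mul_assoc, my_charpoly_sq_comm, mul_assoc, Unitary.coe_star_mul_self, mul_one]

lemma my_charpoly_diagonal (d : k → ℂ) :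
    (Matrix.diagonal d).charpoly = ∏ i, (X - C (d i)) := by
  rw [Matrix.charpoly]
  have h : charmatrix (Matrix.diagonal d) = Matrix.diagonal (fun i => X - C (d i)) := by
    ext i j
    by_cases hij : i = j
    · subst hij; simp [charmatrix_apply]
    · simp [charmatrix_apply, hij, Matrix.diagonal_apply_ne _ hij]
  rw [h, Matrix.det_diagonal]

lemma my_roots_charpoly_herm {M : Matrix k k ℂ} (hM : M.IsHermitian) :
    M.charpoly.roots = (Finset.univ.val.map hM.eigenvalues).map (fun x : ℝ => (x : ℂ)) := by
  conv_lhs => rw [hM.spectral_theorem, Unitary.conjStarAlgAut_apply, my_charpoly_unitary_conj, my_charpoly_diagonal]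
  rw [Finset.prod_eq_multiset_prod]
  have h : (Multiset.map (fun i => X - C ((RCLike.ofReal ∘ hM.eigenvalues) i)) Finset.univ.val)
      = Multiset.map (fun a => X - C a)
        (Finset.univ.val.map (fun i => ((hM.eigenvalues i : ℝ) : ℂ))) := by
    rw [Multiset.map_map]; rfl
  rw [h, roots_multiset_prod_X_sub_C, Multiset.map_map]; rfl

lemma my_eig_eq_of_charpoly {M N : Matrix k k ℂ} (hM : M.IsHermitian) (hN : N.IsHermitian)
    (h : M.charpoly = N.charpoly) :
    Finset.univ.val.map hM.eigenvalues = Finset.univ.val.map hN.eigenvalues := by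
  apply Multiset.map_injective Complex.ofReal_injective
  have h1 := my_roots_charpoly_herm hM
  have h2 := my_roots_charpoly_herm hN
  rw [h] at h1
  exact h1.symm.trans h2

lemma my_eig_congr {M N : Matrix k k ℂ} (h : M = N) (hM : M.IsHermitian) (hN : N.IsHermitian) :
    Finset.univ.val.map hM.eigenvalues = Finset.univ.val.map hN.eigenvalues := by
  subst h; rfl

lemma my_eig_one_sub {M : Matrix k k ℂ} (hM : M.IsHermitian)
    (hM' : ((1 : Matrix k k ℂ) - M).IsHermitian) :
    Finset.univ.val.map hM'.eigenvalues
      = (Finset.univ.val.map hM.eigenvalues).map (fun x : ℝ => 1 - x) := by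
  apply Multiset.map_injective Complex.ofReal_injective
  rw [← my_roots_charpoly_herm hM']
  have hVV : (hM.eigenvectorUnitary : Matrix k k ℂ) * star (hM.eigenvectorUnitary : Matrix k k ℂ)
      = 1 := Matrix.mem_unitaryGroup_iff.mp hM.eigenvectorUnitary.2
  have hd : Matrix.diagonal (fun i => 1 - (RCLike.ofReal ∘ hM.eigenvalues) i)
      = (1 : Matrix k k ℂ) - Matrix.diagonal ((RCLike.ofReal ∘ hM.eigenvalues : k → ℂ)) := by
    ext i j
    by_cases hij : i = j
    · subst hij; simp
    · simp [Matrix.diagonal_apply_ne _ hij, Matrix.one_apply, hij]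
  have h1 : (1 : Matrix k k ℂ) - M
      = (hM.eigenvectorUnitary : Matrix k k ℂ)
        * Matrix.diagonal (fun i => 1 - (RCLike.ofReal ∘ hM.eigenvalues) i)
        * star (hM.eigenvectorUnitary : Matrix k k ℂ) := by
    rw [hd, Matrix.mul_sub, mul_one, Matrix.sub_mul, hVV, ← Unitary.conjStarAlgAut_apply (S := ℂ), ← hM.spectral_theorem]
  rw [h1, my_charpoly_unitary_conj, my_charpoly_diagonal, Finset.prod_eq_multiset_prod]
  have h2 : (Multiset.map (fun i => X - C (1 - (RCLike.ofReal ∘ hM.eigenvalues) i)) Finset.univ.val)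
      = Multiset.map (fun a => X - C a)
        (Finset.univ.val.map (fun i => ((1 - hM.eigenvalues i : ℝ) : ℂ))) := by
    rw [Multiset.map_map]
    apply Multiset.map_congr rfl
    intro i _
    push_cast
    rfl
  rw [h2, roots_multiset_prod_X_sub_C, Multiset.map_map, Multiset.map_map]
  rfl

lemma my_filter_roots_eq (A : Matrix k l ℂ) (B : Matrix l k ℂ) :
    ((A * B).charpoly.roots).filter (· ≠ 0) = ((B * A).charpoly.roots).filter (· ≠ 0) := by
  have h := congrArg Polynomial.roots (my_charpoly_mul_comm A B)
  rw [roots_mul (mul_ne_zero (A * B).charpoly_monic.ne_zero (pow_ne_zero _ X_ne_zero)),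
    roots_mul (mul_ne_zero (B * A).charpoly_monic.ne_zero (pow_ne_zero _ X_ne_zero)),
    roots_pow, roots_pow, roots_X, Multiset.nsmul_singleton, Multiset.nsmul_singleton] at h
  have h2 := congrArg (Multiset.filter (· ≠ 0)) h
  have hrep : ∀ c : ℕ, Multiset.filter (· ≠ 0) (Multiset.replicate c (0:ℂ)) = 0 := by
    intro c
    rw [Multiset.filter_eq_nil]
    intro a ha
    simp [Multiset.eq_of_mem_replicate ha]
  rwa [Multiset.filter_add, Multiset.filter_add, hrep, hrep, add_zero, add_zero] at h2

lemma my_eig_filter_comm (A : Matrix k l ℂ) :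
    Multiset.filter (· ≠ 0)
        (Finset.univ.val.map (Matrix.isHermitian_mul_conjTranspose_self A).eigenvalues)
      = Multiset.filter (· ≠ 0)
        (Finset.univ.val.map (Matrix.isHermitian_conjTranspose_mul_self A).eigenvalues) := by
  apply Multiset.map_injective Complex.ofReal_injective
  have key : ∀ (s : Multiset ℝ), Multiset.map (fun x : ℝ => (x:ℂ)) (s.filter (· ≠ 0))
      = (s.map (fun x : ℝ => (x:ℂ))).filter (· ≠ 0) := by
    intro s
    rw [Multiset.filter_map]
    congr 1
    apply Multiset.filter_congr
    intro x _
    simp [Function.comp]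
  rw [key, key, ← my_roots_charpoly_herm, ← my_roots_charpoly_herm]
  exact my_filter_roots_eq A Aᴴ

lemma my_sort_unique {l : List ℝ} (hl : l.Pairwise (· ≥ ·)) {s : Multiset ℝ}
    (h : (l : Multiset ℝ) = s) : s.sort (· ≥ ·) = l :=
  List.Perm.eq_of_pairwise' (Multiset.pairwise_sort _ _) hl
    (Multiset.coe_eq_coe.mp (by rw [Multiset.sort_eq, ← h]))

lemma my_sort_map_monotone (s : Multiset ℝ) {f : ℝ → ℝ} (hf : Monotone f) :
    (s.map f).sort (· ≥ ·) = (s.sort (· ≥ ·)).map f := by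
  apply my_sort_unique
  · exact List.Pairwise.map f (fun a b h => hf h) (Multiset.pairwise_sort s _)
  · rw [← Multiset.map_coe, Multiset.sort_eq]

lemma my_sort_map_antitone (s : Multiset ℝ) {g : ℝ → ℝ} (hg : Antitone g) :
    (s.map g).sort (· ≥ ·) = ((s.sort (· ≥ ·)).map g).reverse := by
  apply my_sort_unique
  · rw [List.pairwise_reverse]
    exact List.Pairwise.map g (fun a b h => hg h) (Multiset.pairwise_sort s _)
  · rw [← Multiset.coe_reverse, List.reverse_reverse, ← Multiset.map_coe, Multiset.sort_eq]

lemma my_sorted_last_min {l : List ℝ} (hl : l.Pairwise (· ≥ ·)) {i : ℕ} (hi : i < l.length) :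
    l[l.length - 1]'(by omega) ≤ l[i] := by
  rcases eq_or_lt_of_le (Nat.le_sub_one_of_lt hi) with h | h
  · simp [h]
  · exact hl.rel_get_of_lt (by simpa using h)

lemma my_svm_eq {a b : ℕ} (A : Matrix (Fin a) (Fin b) ℂ) :
    singularValueMultiset A
      = (Finset.univ.val.map (Matrix.isHermitian_mul_conjTranspose_self A).eigenvalues).map
          Real.sqrt := by
  rw [singularValueMultiset, Multiset.map_map]; rfl

lemma my_filter_sqrt (s : Multiset ℝ) (hs : ∀ x ∈ s, 0 ≤ x) :
    (s.map Real.sqrt).filter (· ≠ 0) = (s.filter (· ≠ 0)).map Real.sqrt := by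
  rw [Multiset.filter_map]
  congr 1
  apply Multiset.filter_congr
  intro x hx
  simp only [Function.comp_apply, ne_eq]
  rw [Real.sqrt_eq_zero (hs x hx)]

lemma my_opNorm_sq {a b : ℕ} (ha : 0 < a) (Bm : Matrix (Fin a) (Fin b) ℂ) :
    ∃ i₀ : Fin a,
      (∀ j, (Matrix.isHermitian_mul_conjTranspose_self Bm).eigenvalues j
        ≤ (Matrix.isHermitian_mul_conjTranspose_self Bm).eigenvalues i₀) ∧
      opNorm Bm ^ 2 = (Matrix.isHermitian_mul_conjTranspose_self Bm).eigenvalues i₀ := by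
  haveI : Nonempty (Fin a) := ⟨⟨0, ha⟩⟩
  letI : CStarAlgebra (Matrix (Fin a) (Fin a) ℂ) := Matrix.instCStarAlgebra
  set eig := (Matrix.isHermitian_mul_conjTranspose_self Bm).eigenvalues with heig
  obtain ⟨i₀, hi₀⟩ := Finite.exists_max eig
  refine ⟨i₀, hi₀, ?_⟩
  have hnn : ∀ j, 0 ≤ eig j := Matrix.eigenvalues_self_mul_conjTranspose_nonneg Bm
  have hsa : IsSelfAdjoint (Bm * Bmᴴ) := Matrix.isHermitian_mul_conjTranspose_self Bm
  have h1 : opNorm Bm ^ 2 = ‖Bm * Bmᴴ‖ := by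
    have h := Matrix.l2_opNorm_conjTranspose_mul_self (Bmᴴ)
    rw [Matrix.conjTranspose_conjTranspose, Matrix.l2_opNorm_conjTranspose] at h
    rw [h, ← sq]
    rfl
  have h2 : ‖Bm * Bmᴴ‖ = (spectralRadius ℝ (Bm * Bmᴴ)).toReal :=
    (hsa.toReal_spectralRadius_eq_norm).symm
  have h3 : spectralRadius ℝ (Bm * Bmᴴ) = (‖eig i₀‖₊ : ENNReal) := by
    rw [spectralRadius,
      (Matrix.isHermitian_mul_conjTranspose_self Bm).spectrum_real_eq_range_eigenvalues, iSup_range]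
    apply le_antisymm
    · apply iSup_le
      intro j
      have : ‖eig j‖₊ ≤ ‖eig i₀‖₊ := by
        rw [Real.nnnorm_of_nonneg (hnn j), Real.nnnorm_of_nonneg (hnn i₀)]
        exact hi₀ j
      exact_mod_cast this
    · exact le_iSup (fun j => ((‖eig j‖₊ : ENNReal))) i₀
  rw [h1, h2, h3, ENNReal.coe_toReal, coe_nnnorm, Real.norm_of_nonneg (hnn i₀)]

end Aux

lemma my_getElem_congr {L : List ℝ} {i j : ℕ} (h : i = j) (hi : i < L.length) :
    L[i] = L[j]'(h ▸ hi) := by subst h; rfl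

/-- For a block unitary matrix, the nonzero singular values of the two
off-diagonal blocks coincide, the singular values of `U₁₁` and `U₁₂` pair up as
`σᵢ(U₁₁)² + σ_{n+1-i}(U₁₂)² = 1`, and `‖U₁₂‖² = 1 - σ_min(U₁₁)²`. -/
theorem block_unitary_singular_value_relations
    (n m : ℕ) (hn : 0 < n)
    (U : Matrix (Fin n ⊕ Fin m) (Fin n ⊕ Fin m) ℂ)
    (hU : U ∈ Matrix.unitaryGroup (Fin n ⊕ Fin m) ℂ) :
    (Multiset.filter (· ≠ 0) (singularValueMultiset U.toBlocks₁₂) =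
        Multiset.filter (· ≠ 0) (singularValueMultiset U.toBlocks₂₁)) ∧
    (∀ i : Fin n,
        sortedSingularValues U.toBlocks₁₁ i ^ 2 +
          sortedSingularValuesRect U.toBlocks₁₂ i.rev ^ 2 = 1) ∧
    opNorm U.toBlocks₁₂ ^ 2 = 1 - sortedSingularValues U.toBlocks₁₁ ⟨n - 1, by omega⟩ ^ 2 := by
  set A := U.toBlocks₁₁ with hA
  set B := U.toBlocks₁₂ with hB
  set C := U.toBlocks₂₁ with hC
  set D := U.toBlocks₂₂ with hD
  -- block equations
  have hUU : U * Uᴴ = 1 := by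
    rw [← Matrix.star_eq_conjTranspose]; exact Matrix.mem_unitaryGroup_iff.mp hU
  have hUU' : Uᴴ * U = 1 := by
    rw [← Matrix.star_eq_conjTranspose]; exact Matrix.mem_unitaryGroup_iff'.mp hU
  have hblock : U = Matrix.fromBlocks A B C D := (Matrix.fromBlocks_toBlocks U).symm
  rw [hblock, Matrix.fromBlocks_conjTranspose, Matrix.fromBlocks_multiply,
    ← Matrix.fromBlocks_one] at hUU hUU'
  have e1 : A * Aᴴ + B * Bᴴ = 1 := by
    have := congrArg Matrix.toBlocks₁₁ hUU
    rwa [Matrix.toBlocks_fromBlocks₁₁, Matrix.toBlocks_fromBlocks₁₁] at this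
  have e2 : C * Cᴴ + D * Dᴴ = 1 := by
    have := congrArg Matrix.toBlocks₂₂ hUU
    rwa [Matrix.toBlocks_fromBlocks₂₂, Matrix.toBlocks_fromBlocks₂₂] at this
  have e3 : Aᴴ * A + Cᴴ * C = 1 := by
    have := congrArg Matrix.toBlocks₁₁ hUU'
    rwa [Matrix.toBlocks_fromBlocks₁₁, Matrix.toBlocks_fromBlocks₁₁] at this
  have e4 : Bᴴ * B + Dᴴ * D = 1 := by
    have := congrArg Matrix.toBlocks₂₂ hUU'
    rwa [Matrix.toBlocks_fromBlocks₂₂, Matrix.toBlocks_fromBlocks₂₂] at this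
  have fBB : B * Bᴴ = 1 - A * Aᴴ := eq_sub_of_add_eq' e1
  have fCC : C * Cᴴ = 1 - D * Dᴴ := eq_sub_of_add_eq e2
  have fAA : Aᴴ * A = 1 - Cᴴ * C := eq_sub_of_add_eq e3
  have fBB' : Bᴴ * B = 1 - Dᴴ * D := eq_sub_of_add_eq e4
  set s : Multiset ℝ :=
    Finset.univ.val.map (Matrix.isHermitian_conjTranspose_mul_self A).eigenvalues with hs
  -- E(B Bᴴ) = s.map (1 - ·)
  have hEBB : Finset.univ.val.map (Matrix.isHermitian_mul_conjTranspose_self B).eigenvalues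
      = s.map (fun x : ℝ => 1 - x) := by
    have step1 := my_eig_congr fBB (Matrix.isHermitian_mul_conjTranspose_self B)
      ((Matrix.isHermitian_one).sub (Matrix.isHermitian_mul_conjTranspose_self A))
    have step2 := my_eig_one_sub (Matrix.isHermitian_mul_conjTranspose_self A)
      ((Matrix.isHermitian_one).sub (Matrix.isHermitian_mul_conjTranspose_self A))
    have step3 := my_eig_eq_of_charpoly (Matrix.isHermitian_mul_conjTranspose_self A)
      (Matrix.isHermitian_conjTranspose_mul_self A) (my_charpoly_sq_comm A Aᴴ)
    rw [step1, step2, step3]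
  have hsC : s = (Finset.univ.val.map
        (Matrix.isHermitian_conjTranspose_mul_self C).eigenvalues).map (fun x : ℝ => 1 - x) := by
    have step1 := my_eig_congr fAA (Matrix.isHermitian_conjTranspose_mul_self A)
      ((Matrix.isHermitian_one).sub (Matrix.isHermitian_conjTranspose_mul_self C))
    have step2 := my_eig_one_sub (Matrix.isHermitian_conjTranspose_mul_self C)
      ((Matrix.isHermitian_one).sub (Matrix.isHermitian_conjTranspose_mul_self C))
    rw [hs, step1, step2]
  have hs_nonneg : ∀ x ∈ s, 0 ≤ x := by
    intro x hx
    obtain ⟨j, _, rfl⟩ := Multiset.mem_map.mp hx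
    exact Matrix.eigenvalues_conjTranspose_mul_self_nonneg A j
  have hs_le1 : ∀ x ∈ s, x ≤ 1 := by
    intro x hx
    rw [hsC] at hx
    obtain ⟨y, hy, rfl⟩ := Multiset.mem_map.mp hx
    obtain ⟨j, _, rfl⟩ := Multiset.mem_map.mp hy
    have := Matrix.eigenvalues_conjTranspose_mul_self_nonneg C j
    linarith
  -- Part 1
  have part1 : Multiset.filter (· ≠ 0) (singularValueMultiset B) =
      Multiset.filter (· ≠ 0) (singularValueMultiset C) := by
    rw [my_svm_eq B, my_svm_eq C,
      my_filter_sqrt _ (fun x hx => by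
        obtain ⟨j, _, rfl⟩ := Multiset.mem_map.mp hx
        exact Matrix.eigenvalues_self_mul_conjTranspose_nonneg B j),
      my_filter_sqrt _ (fun x hx => by
        obtain ⟨j, _, rfl⟩ := Multiset.mem_map.mp hx
        exact Matrix.eigenvalues_self_mul_conjTranspose_nonneg C j)]
    congr 1
    rw [my_eig_filter_comm B]
    congr 1
    have g1 := my_eig_congr fBB' (Matrix.isHermitian_conjTranspose_mul_self B)
      ((Matrix.isHermitian_one).sub (Matrix.isHermitian_conjTranspose_mul_self D))
    have g2 := my_eig_one_sub (Matrix.isHermitian_conjTranspose_mul_self D)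
      ((Matrix.isHermitian_one).sub (Matrix.isHermitian_conjTranspose_mul_self D))
    have g3 := my_eig_eq_of_charpoly (Matrix.isHermitian_conjTranspose_mul_self D)
      (Matrix.isHermitian_mul_conjTranspose_self D) (my_charpoly_sq_comm Dᴴ D)
    have g4 := my_eig_congr fCC (Matrix.isHermitian_mul_conjTranspose_self C)
      ((Matrix.isHermitian_one).sub (Matrix.isHermitian_mul_conjTranspose_self D))
    have g5 := my_eig_one_sub (Matrix.isHermitian_mul_conjTranspose_self D)
      ((Matrix.isHermitian_one).sub (Matrix.isHermitian_mul_conjTranspose_self D))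
    rw [g1, g2, g3, g4, g5]
  -- Part 2 setup
  set lst := s.sort (· ≥ ·) with hlst
  have hlen : lst.length = n := by
    rw [hlst, Multiset.length_sort, hs, Multiset.card_map]
    simp
  have hAsort : ((Finset.univ.val.map fun j =>
      Real.sqrt ((Matrix.isHermitian_conjTranspose_mul_self A).eigenvalues j)).sort (· ≥ ·))
      = lst.map Real.sqrt := by
    have hm : s.map Real.sqrt = Finset.univ.val.map (fun j =>
        Real.sqrt ((Matrix.isHermitian_conjTranspose_mul_self A).eigenvalues j)) := by
      rw [hs, Multiset.map_map]; rfl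
    rw [← hm, my_sort_map_monotone s (fun a b h => Real.sqrt_le_sqrt h)]
  have hBsort : ((Finset.univ.val.map fun j =>
      Real.sqrt ((Matrix.isHermitian_mul_conjTranspose_self B).eigenvalues j)).sort (· ≥ ·))
      = ((lst.map (fun x : ℝ => Real.sqrt (1 - x)))).reverse := by
    have hm : (Finset.univ.val.map fun j =>
        Real.sqrt ((Matrix.isHermitian_mul_conjTranspose_self B).eigenvalues j))
        = s.map (fun x : ℝ => Real.sqrt (1 - x)) := by
      have : (Finset.univ.val.map fun j =>
          Real.sqrt ((Matrix.isHermitian_mul_conjTranspose_self B).eigenvalues j))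
          = (Finset.univ.val.map
              (Matrix.isHermitian_mul_conjTranspose_self B).eigenvalues).map Real.sqrt := by
        rw [Multiset.map_map]; rfl
      rw [this, hEBB, Multiset.map_map]; rfl
    rw [hm, my_sort_map_antitone s (fun a b h => Real.sqrt_le_sqrt (by linarith))]
  have hv1 : ∀ i : Fin n, sortedSingularValues A i
      = Real.sqrt (lst[(i : ℕ)]'(by rw [hlen]; exact i.2)) := by
    intro i
    show (((Finset.univ.val.map fun j =>
        Real.sqrt ((Matrix.isHermitian_conjTranspose_mul_self A).eigenvalues j)).sort (· ≥ ·))).get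
          ⟨i, by simp⟩ = _
    simp only [List.get_eq_getElem, hAsort, List.getElem_map]
  have hv2 : ∀ i : Fin n, sortedSingularValuesRect B i.rev
      = Real.sqrt (1 - lst[(i : ℕ)]'(by rw [hlen]; exact i.2)) := by
    intro i
    show (((Finset.univ.val.map fun j =>
        Real.sqrt ((Matrix.isHermitian_mul_conjTranspose_self B).eigenvalues j)).sort (· ≥ ·))).get
          ⟨i.rev, by simp; omega⟩ = _
    have hidx : lst.length - 1 - ((i.rev : Fin n) : ℕ) = (i : ℕ) := by
      rw [hlen, Fin.val_rev]
      have h2 := i.isLt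
      omega
    simp only [List.get_eq_getElem, hBsort, List.getElem_reverse, List.getElem_map,
      List.length_map]
    rw [my_getElem_congr hidx]
  have hmem : ∀ i : Fin n, lst[(i : ℕ)]'(by rw [hlen]; exact i.2) ∈ s := by
    intro i
    rw [← Multiset.sort_eq s (· ≥ ·), ← hlst]
    exact Multiset.mem_coe.mpr (List.getElem_mem _)
  have key2 : ∀ i : Fin n,
      sortedSingularValues A i ^ 2 + sortedSingularValuesRect B i.rev ^ 2 = 1 := by
    intro i
    have hx0 := hs_nonneg _ (hmem i)
    have hx1 := hs_le1 _ (hmem i)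
    rw [hv1 i, hv2 i, Real.sq_sqrt hx0, Real.sq_sqrt (by linarith)]
    ring
  refine ⟨part1, key2, ?_⟩
  -- Part 3
  obtain ⟨i₀, hmax, hop⟩ := my_opNorm_sq hn B
  have hn1 : n - 1 < lst.length := by rw [hlen]; omega
  set y := lst[n-1]'hn1 with hy
  have hymem : y ∈ s := by
    rw [← Multiset.sort_eq s (· ≥ ·), ← hlst]
    exact Multiset.mem_coe.mpr (List.getElem_mem _)
  have hymin : ∀ x ∈ s, y ≤ x := by
    intro x hx
    rw [← Multiset.sort_eq s (· ≥ ·), ← hlst, Multiset.mem_coe, List.mem_iff_getElem] at hx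
    obtain ⟨j, hj, rfl⟩ := hx
    have hle : lst[lst.length - 1]'(by omega) ≤ lst[j] :=
      my_sorted_last_min (Multiset.pairwise_sort s _) hj
    have heq : y = lst[lst.length - 1]'(by omega) := by
      rw [hy]
      exact my_getElem_congr (by omega) hn1
    exact heq.trans_le hle
  have h_eig_max : (Matrix.isHermitian_mul_conjTranspose_self B).eigenvalues i₀ = 1 - y := by
    apply le_antisymm
    · have hmem2 : (Matrix.isHermitian_mul_conjTranspose_self B).eigenvalues i₀
          ∈ s.map (fun x : ℝ => 1 - x) := by
        rw [← hEBB]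
        exact Multiset.mem_map_of_mem _ (by simp)
      obtain ⟨x, hx, hxe⟩ := Multiset.mem_map.mp hmem2
      have := hymin x hx
      linarith [hxe.ge, hxe.le]
    · have hmem3 : (1 - y) ∈ Finset.univ.val.map
          (Matrix.isHermitian_mul_conjTranspose_self B).eigenvalues := by
        rw [hEBB]
        exact Multiset.mem_map_of_mem _ hymem
      obtain ⟨j, _, hje⟩ := Multiset.mem_map.mp hmem3
      rw [← hje]
      exact hmax j
  have hσ : sortedSingularValues A ⟨n - 1, by omega⟩ = Real.sqrt y := by
    have := hv1 ⟨n - 1, by omega⟩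
    rw [this]
  rw [hop, h_eig_max, hσ, Real.sq_sqrt (hs_nonneg _ hymem)]
end

section
/- If A is a contraction with singular values σ₁ = ... = σ_r = 1 > σ_{r+1} ≥ ... ≥ σ_n, then there exist unitary matrices W and Q such that A = W · diag(1,...,1, σ_{r+1},...,σ_n) · Q†, and the minimal unitary dilation of A can be written as diag(W, W₂) · [[I_r ⊕ C, 0 ⊕ (−S)],[0 ⊕ S, C]] · diag(Q†, Q₂†) for suitable unitary W₂, Q₂, where C = diag(σ_{r+1},...,σ_n) and S = (I − C²)^{1/2}. -/
open Matrix

section DilationAux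


lemma exists_perm_sorted {n : ℕ} (f : Fin n → ℝ) :
    ∃ e : Equiv.Perm (Fin n), ∀ i : Fin n,
      ((Finset.univ.val.map f).sort (· ≥ ·)).get ⟨i, by simp⟩ = f (e i) := by
  classical
  set L : List ℝ := (Finset.univ.val.map f).sort (· ≥ ·) with hL
  let τ := Tuple.sort f
  let h : Fin n → ℝ := f ∘ τ ∘ Fin.rev
  have hmono : Monotone (f ∘ τ) := Tuple.monotone_sort f
  have hsorted2 : (List.ofFn h).Pairwise (· ≥ ·) := by
    rw [List.pairwise_ofFn]
    intro i j hij
    exact hmono (by simpa [Fin.rev_le_rev] using hij.le)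
  have hperm : L.Perm (List.ofFn h) := by
    rw [← Multiset.coe_eq_coe, Multiset.sort_eq, ← Fin.univ_val_map]
    have : Finset.univ.val.map h = (Finset.univ.val.map (fun i => τ (Fin.rev i))).map f := by
      rw [Multiset.map_map]; rfl
    rw [this]
    congr 1
    exact (Multiset.map_univ_val_equiv (Fin.revPerm.trans τ)).symm
  have hLsorted : L.Pairwise (· ≥ ·) := Multiset.pairwise_sort _ _
  have hEq : L = List.ofFn h := List.Perm.eq_of_pairwise (fun _ _ _ _ h1 h2 => le_antisymm h2 h1) hLsorted hsorted2 hperm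
  refine ⟨Fin.revPerm.trans τ, fun i => ?_⟩
  rw [List.get_of_eq hEq, List.get_ofFn]
  rfl

lemma exists_unitary_factor {n : ℕ} (B : Matrix (Fin n) (Fin n) ℂ)
    (σ : Fin n → ℝ)
    (hBB : Bᴴ * B = Matrix.diagonal (fun i => ((σ i : ℂ))^2)) :
    ∃ W ∈ Matrix.unitaryGroup (Fin n) ℂ,
      B = W * Matrix.diagonal (fun i => (σ i : ℂ)) := by
  classical
  have hcol : ∀ i j : Fin n, (∑ k, (starRingEnd ℂ) (B k i) * B k j)
      = if i = j then ((σ i : ℂ))^2 else 0 := by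
    intro i j
    have := congrArg (fun M : Matrix (Fin n) (Fin n) ℂ => M i j) hBB
    simpa [Matrix.mul_apply, Matrix.conjTranspose_apply, Matrix.diagonal_apply] using this
  have hzero : ∀ j : Fin n, σ j = 0 → ∀ i, B i j = 0 := by
    intro j hj i
    have h0 : (∑ k, (Complex.normSq (B k j) : ℂ)) = 0 := by
      have h := hcol j j
      rw [if_pos rfl, hj] at h
      norm_num at h
      rw [← h]
      refine Finset.sum_congr rfl fun k _ => ?_
      rw [← Complex.normSq_eq_conj_mul_self]
    have h0' : (∑ k, Complex.normSq (B k j)) = 0 := by exact_mod_cast h0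
    have := (Finset.sum_eq_zero_iff_of_nonneg (fun k _ => Complex.normSq_nonneg _)).mp h0' i
      (Finset.mem_univ i)
    exact Complex.normSq_eq_zero.mp this
  set v : Fin n → EuclideanSpace ℂ (Fin n) :=
    fun j => WithLp.toLp 2 (fun i => ((σ j : ℂ))⁻¹ * B i j) with hv
  set s : Set (Fin n) := {j | σ j ≠ 0} with hs
  have horth : Orthonormal ℂ (s.restrict v) := by
    rw [orthonormal_iff_ite]
    rintro ⟨i, hi⟩ ⟨j, hj⟩
    have hinner : (inner ℂ (v i) (v j) : ℂ)
        = (starRingEnd ℂ) ((σ i : ℂ))⁻¹ * ((σ j : ℂ))⁻¹ * ∑ k, (starRingEnd ℂ) (B k i) * B k j := by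
      rw [PiLp.inner_apply, Finset.mul_sum]
      refine Finset.sum_congr rfl fun k _ => ?_
      simp only [RCLike.inner_apply, hv, _root_.map_mul]
      ring
    change inner ℂ (v i) (v j) = _
    rw [hinner, hcol i j]
    by_cases hij : i = j
    · subst hij
      simp only [if_pos rfl, Subtype.mk.injEq, if_pos rfl, if_true]
      have hσ : ((σ i : ℂ)) ≠ 0 := by exact_mod_cast hi
      rw [map_inv₀, Complex.conj_ofReal]
      field_simp
    · simp [hij, Subtype.mk.injEq]
  have hcard : Module.finrank ℂ (EuclideanSpace ℂ (Fin n)) = Fintype.card (Fin n) := by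
    simp [finrank_euclideanSpace]
  obtain ⟨b, hb⟩ := horth.exists_orthonormalBasis_extension_of_card_eq hcard
  refine ⟨Matrix.of fun i j => b j i, ?_, ?_⟩
  · rw [Matrix.mem_unitaryGroup_iff']
    ext i j
    have hbij := (orthonormal_iff_ite.mp b.orthonormal) i j
    rw [PiLp.inner_apply] at hbij
    simp only [RCLike.inner_apply] at hbij
    simpa [Matrix.mul_apply, Matrix.star_eq_conjTranspose, Matrix.conjTranspose_apply,
      Matrix.one_apply, mul_comm] using hbij
  · ext i j
    rw [Matrix.mul_diagonal]
    by_cases hj : σ j = 0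
    · simp [hzero j hj i, hj]
    · have hbj := hb j hj
      have hσ : ((σ j : ℂ)) ≠ 0 := by exact_mod_cast hj
      have hbji : b j i = ((σ j : ℂ))⁻¹ * B i j := by rw [hbj]
      simp only [Matrix.of_apply, hbji]
      rw [mul_comm ((σ j : ℂ))⁻¹, mul_assoc, inv_mul_cancel₀ hσ, mul_one]

lemma exists_Q {n : ℕ} (B : Matrix (Fin n) (Fin n) ℂ) (hB : B.IsHermitian)
    (e : Equiv.Perm (Fin n)) :
    ∃ Q ∈ Matrix.unitaryGroup (Fin n) ℂ,
      Qᴴ * B * Q = Matrix.diagonal (fun i => ((hB.eigenvalues (e i) : ℝ) : ℂ)) := by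
  classical
  set Q₀ : Matrix (Fin n) (Fin n) ℂ := (hB.eigenvectorUnitary : Matrix (Fin n) (Fin n) ℂ)
    with hQ₀
  have hU : Q₀ᴴ * Q₀ = 1 := by
    simpa [Matrix.star_eq_conjTranspose] using
      (Matrix.mem_unitaryGroup_iff'.mp hB.eigenvectorUnitary.2)
  refine ⟨Q₀.submatrix id ⇑e, ?_, ?_⟩
  · rw [Matrix.mem_unitaryGroup_iff', Matrix.star_eq_conjTranspose,
      Matrix.conjTranspose_submatrix]
    have h := Matrix.submatrix_mul_equiv Q₀ᴴ Q₀ ⇑e (Equiv.refl (Fin n)) ⇑e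
    simp only [Equiv.coe_refl] at h
    rw [h, hU, Matrix.submatrix_one_equiv]
  · have hdiag : Q₀ᴴ * B * Q₀ = Matrix.diagonal (RCLike.ofReal ∘ hB.eigenvalues) := by
      simpa [Matrix.star_eq_conjTranspose] using hB.conjStarAlgAut_star_eigenvectorUnitary
    rw [Matrix.conjTranspose_submatrix]
    have h1 : Q₀ᴴ.submatrix ⇑e id * B = (Q₀ᴴ * B).submatrix ⇑e id := by
      have := Matrix.submatrix_mul_equiv Q₀ᴴ B ⇑e (Equiv.refl (Fin n)) id
      simpa using this
    have h2 : (Q₀ᴴ * B).submatrix ⇑e id * Q₀.submatrix id ⇑e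
        = (Q₀ᴴ * B * Q₀).submatrix ⇑e ⇑e := by
      have := Matrix.submatrix_mul_equiv (Q₀ᴴ * B) Q₀ ⇑e (Equiv.refl (Fin n)) ⇑e
      simpa using this
    rw [h1, h2, hdiag]
    ext i j
    by_cases hij : i = j
    · subst hij; simp [Matrix.submatrix_apply, Matrix.diagonal_apply]
    · simp [Matrix.submatrix_apply, Matrix.diagonal_apply, hij,
        fun h => hij (e.injective h)]

lemma sum_ite_fin {n r : ℕ} (i : Fin n) (f : Fin (n - r) → ℂ) :
    (∑ j : Fin (n - r), if (i : ℕ) = r + (j : ℕ) then f j else 0)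
    = if h : r ≤ (i : ℕ) then f ⟨(i : ℕ) - r, by have := i.isLt; omega⟩ else 0 := by
  by_cases h : r ≤ (i : ℕ)
  · rw [dif_pos h]
    have hlt : (i : ℕ) - r < n - r := by have := i.isLt; omega
    rw [Finset.sum_eq_single ⟨(i : ℕ) - r, hlt⟩]
    · rw [if_pos (by simp; omega)]
    · intro j _ hj
      rw [if_neg]
      intro hc
      exact hj (Fin.ext (by simp; omega))
    · simp
  · rw [dif_neg h]
    exact Finset.sum_eq_zero fun j _ => if_neg (by omega)

lemma sum_ite_fin' {n r : ℕ} (j : Fin (n - r)) (f : Fin n → ℂ) :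
    (∑ i : Fin n, if (i : ℕ) = r + (j : ℕ) then f i else 0)
    = f ⟨r + (j : ℕ), by have := j.isLt; omega⟩ := by
  rw [Finset.sum_eq_single ⟨r + (j : ℕ), by have := j.isLt; omega⟩]
  · rw [if_pos rfl]
  · intro i _ hi
    exact if_neg (fun hc => hi (Fin.ext (by simpa using hc)))
  · simp

lemma M_mem_unitary {n r : ℕ} (d : Fin n → ℝ) (C Sm : Fin (n - r) → ℝ)
    (hC : ∀ j : Fin (n - r), C j = d ⟨r + (j : ℕ), by have := j.isLt; omega⟩)
    (hS : ∀ j, Sm j = Real.sqrt (1 - C j ^ 2))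
    (h1 : ∀ i : Fin n, (i : ℕ) < r → d i = 1)
    (hC0 : ∀ j, 0 ≤ C j) (hC1 : ∀ j, C j ≤ 1) :
    fromBlocks (Matrix.diagonal fun i => (d i : ℂ))
        (Matrix.of fun i (j : Fin (n - r)) => if (i : ℕ) = r + (j : ℕ) then (-(Sm j) : ℂ) else 0)
        (Matrix.of fun (j : Fin (n - r)) i => if (i : ℕ) = r + (j : ℕ) then ((Sm j : ℝ) : ℂ) else 0)
        (Matrix.diagonal fun j => (C j : ℂ))
      ∈ Matrix.unitaryGroup (Fin n ⊕ Fin (n - r)) ℂ := by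
  classical
  have hS2 : ∀ j, Sm j * Sm j = 1 - C j ^ 2 := by
    intro j
    rw [hS j]
    exact Real.mul_self_sqrt (by nlinarith [hC0 j, hC1 j])
  set D : Matrix (Fin n) (Fin n) ℂ := Matrix.diagonal fun i => (d i : ℂ) with hD
  set N : Matrix (Fin n) (Fin (n - r)) ℂ :=
    Matrix.of fun i j => if (i : ℕ) = r + (j : ℕ) then (-(Sm j) : ℂ) else 0 with hN
  set P : Matrix (Fin (n - r)) (Fin n) ℂ :=
    Matrix.of fun j i => if (i : ℕ) = r + (j : ℕ) then ((Sm j : ℝ) : ℂ) else 0 with hP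
  set Dc : Matrix (Fin (n - r)) (Fin (n - r)) ℂ := Matrix.diagonal fun j => (C j : ℂ) with hDc
  have hDH : Dᴴ = D := by
    ext a b
    rw [Matrix.conjTranspose_apply]
    simp only [hD, Matrix.diagonal_apply, apply_ite (star : ℂ → ℂ), star_zero,
      Complex.star_def, Complex.conj_ofReal]
    by_cases hab : a = b
    · subst hab; simp
    · rw [if_neg (Ne.symm hab), if_neg hab]
  have hDcH : Dcᴴ = Dc := by
    ext a b
    rw [Matrix.conjTranspose_apply]
    simp only [hDc, Matrix.diagonal_apply, apply_ite (star : ℂ → ℂ), star_zero,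
      Complex.star_def, Complex.conj_ofReal]
    by_cases hab : a = b
    · subst hab; simp
    · rw [if_neg (Ne.symm hab), if_neg hab]
  have hdC : ∀ (i : Fin n) (hi : r ≤ (i : ℕ)),
      C ⟨(i : ℕ) - r, by have := i.isLt; omega⟩ = d i := by
    intro i hi
    rw [hC]
    congr 1
    exact Fin.ext (by simp; omega)
  have h11 : Dᴴ * D + Pᴴ * P = 1 := by
    ext i i'
    have e2 : (Pᴴ * P) i i'
        = ∑ x : Fin (n - r), if (i : ℕ) = r + (x : ℕ) ∧ (i' : ℕ) = r + (x : ℕ)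
            then (Sm x : ℂ) * (Sm x : ℂ) else 0 := by
      rw [Matrix.mul_apply]
      refine Finset.sum_congr rfl fun x _ => ?_
      rw [Matrix.conjTranspose_apply]
      simp only [hP, Matrix.of_apply, apply_ite (star : ℂ → ℂ), star_zero,
        Complex.star_def, Complex.conj_ofReal, ite_zero_mul_ite_zero]
    rw [Matrix.add_apply, e2, hDH, hD, Matrix.diagonal_mul_diagonal, Matrix.diagonal_apply,
      Matrix.one_apply]
    by_cases hii : i = i'
    · subst hii
      rw [if_pos rfl, if_pos rfl]
      simp only [and_self]
      rw [sum_ite_fin i (fun x => (Sm x : ℂ) * (Sm x : ℂ))]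
      by_cases hge : r ≤ (i : ℕ)
      · rw [dif_pos hge]
        have h4 : ((Sm ⟨(i : ℕ) - r, by have := i.isLt; omega⟩ : ℝ) : ℂ)
            * ((Sm ⟨(i : ℕ) - r, by have := i.isLt; omega⟩ : ℝ) : ℂ)
            = 1 - (d i : ℂ) ^ 2 := by
          rw [← Complex.ofReal_mul, hS2, hdC i hge]
          push_cast
          ring
        rw [h4]
        push_cast
        ring
      · rw [dif_neg hge, h1 i (by omega)]
        norm_num
    · rw [if_neg hii, if_neg hii, Finset.sum_eq_zero, add_zero]
      intro x _
      rw [if_neg]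
      rintro ⟨ha, hb⟩
      exact hii (Fin.ext (by omega))
  have h12 : Dᴴ * N + Pᴴ * Dc = 0 := by
    rw [hDH]
    ext i j
    rw [Matrix.add_apply, hD, Matrix.diagonal_mul, hDc, Matrix.mul_diagonal,
      Matrix.conjTranspose_apply, Matrix.zero_apply]
    simp only [hN, hP, Matrix.of_apply, apply_ite (star : ℂ → ℂ), star_zero,
      Complex.star_def, Complex.conj_ofReal]
    by_cases hc : (i : ℕ) = r + (j : ℕ)
    · rw [if_pos hc, if_pos hc]
      have hd : d i = C j := by
        rw [hC]
        congr 1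
        exact Fin.ext (by simpa using hc)
      rw [hd]
      push_cast
      ring
    · rw [if_neg hc, if_neg hc]
      try ring
  have h21 : Nᴴ * D + Dcᴴ * P = 0 := by
    rw [hDcH]
    ext j i
    rw [Matrix.add_apply, hD, Matrix.mul_diagonal, hDc, Matrix.diagonal_mul,
      Matrix.conjTranspose_apply, Matrix.zero_apply]
    simp only [hN, hP, Matrix.of_apply, apply_ite (star : ℂ → ℂ), star_zero, star_neg,
      Complex.star_def, Complex.conj_ofReal]
    by_cases hc : (i : ℕ) = r + (j : ℕ)
    · rw [if_pos hc, if_pos hc]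
      have hd : d i = C j := by
        rw [hC]
        congr 1
        exact Fin.ext (by simpa using hc)
      rw [hd]
      push_cast
      ring
    · rw [if_neg hc, if_neg hc]
      try ring
  have h22 : Nᴴ * N + Dcᴴ * Dc = 1 := by
    ext j j'
    have e2 : (Nᴴ * N) j j'
        = ∑ i : Fin n, if (i : ℕ) = r + (j : ℕ) then
            (if (i : ℕ) = r + (j' : ℕ) then (Sm j : ℂ) * (Sm j' : ℂ) else 0) else 0 := by
      rw [Matrix.mul_apply]
      refine Finset.sum_congr rfl fun x _ => ?_
      rw [Matrix.conjTranspose_apply]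
      simp only [hN, Matrix.of_apply, apply_ite (star : ℂ → ℂ), star_zero, star_neg,
        Complex.star_def, Complex.conj_ofReal, ite_zero_mul_ite_zero, neg_mul, mul_neg,
        neg_neg, ← ite_and, and_comm]
    rw [Matrix.add_apply, e2, hDcH, hDc, Matrix.diagonal_mul_diagonal, Matrix.diagonal_apply,
      Matrix.one_apply, sum_ite_fin' j]
    by_cases hjj : j = j'
    · subst hjj
      rw [if_pos rfl, if_pos (by simp), if_pos rfl]
      have h4 : ((Sm j : ℝ) : ℂ) * ((Sm j : ℝ) : ℂ) = 1 - (C j : ℂ) ^ 2 := by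
        rw [← Complex.ofReal_mul, hS2]
        push_cast
        ring
      rw [h4]
      push_cast
      ring
    · rw [if_neg hjj, if_neg hjj, if_neg (show ¬((⟨r + (j : ℕ), by have := j.isLt; omega⟩
        : Fin n) : ℕ) = r + (j' : ℕ) from fun h => hjj (Fin.ext (by simp at h; omega)))]
      try ring
  rw [Matrix.mem_unitaryGroup_iff', Matrix.star_eq_conjTranspose,
    Matrix.fromBlocks_conjTranspose, Matrix.fromBlocks_multiply, h11, h12, h21, h22,
    Matrix.fromBlocks_one]

lemma fromBlocks_diag_mem_unitary {n m : ℕ} {W : Matrix (Fin n) (Fin n) ℂ}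
    {V : Matrix (Fin m) (Fin m) ℂ}
    (hW : W ∈ Matrix.unitaryGroup (Fin n) ℂ) (hV : V ∈ Matrix.unitaryGroup (Fin m) ℂ) :
    fromBlocks W 0 0 V ∈ Matrix.unitaryGroup (Fin n ⊕ Fin m) ℂ := by
  rw [Matrix.mem_unitaryGroup_iff', Matrix.star_eq_conjTranspose,
    Matrix.fromBlocks_conjTranspose, Matrix.fromBlocks_multiply]
  have hW' : Wᴴ * W = 1 := by
    simpa [Matrix.star_eq_conjTranspose] using Matrix.mem_unitaryGroup_iff'.mp hW
  have hV' : Vᴴ * V = 1 := by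
    simpa [Matrix.star_eq_conjTranspose] using Matrix.mem_unitaryGroup_iff'.mp hV
  simp [hW', hV', Matrix.fromBlocks_one]


end DilationAux

/-- A contraction with exactly `n - r` singular values strictly less than `1`
admits a singular value decomposition `A = W · diag(σ) · Qᴴ` with `W, Q`
unitary, and a minimal unitary dilation of size `(2n - r) × (2n - r)` of the
explicit CS-decomposition block form. -/
theorem minimal_dilation_explicit_form
    (n r : ℕ) (hr : r ≤ n) (A : Matrix (Fin n) (Fin n) ℂ)
    (hcontr : opNorm A ≤ 1)
    (σ : Fin n → ℝ) (hσ : σ = sortedSingularValues A)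
    (h1 : ∀ i : Fin n, (i : ℕ) < r → σ i = 1)
    (h2 : ∀ i : Fin n, r ≤ (i : ℕ) → σ i < 1) :
    ∃ W Q : Matrix (Fin n) (Fin n) ℂ,
      W ∈ Matrix.unitaryGroup (Fin n) ℂ ∧ Q ∈ Matrix.unitaryGroup (Fin n) ℂ ∧
      A = W * Matrix.diagonal (fun i => (σ i : ℂ)) * Qᴴ ∧
      ∃ W₂ Q₂ : Matrix (Fin (n - r)) (Fin (n - r)) ℂ,
        W₂ ∈ Matrix.unitaryGroup (Fin (n - r)) ℂ ∧
        Q₂ ∈ Matrix.unitaryGroup (Fin (n - r)) ℂ ∧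
        (let C : Fin (n - r) → ℝ := fun j => σ ⟨r + j, by have := j.isLt; omega⟩
         let Sm : Fin (n - r) → ℝ := fun j => Real.sqrt (1 - C j ^ 2)
         let M : Matrix (Fin n ⊕ Fin (n - r)) (Fin n ⊕ Fin (n - r)) ℂ :=
           fromBlocks (Matrix.diagonal fun i => (σ i : ℂ))
             (Matrix.of fun i j => if (i : ℕ) = r + (j : ℕ) then (-(Sm j) : ℂ) else 0)
             (Matrix.of fun j i => if (i : ℕ) = r + (j : ℕ) then ((Sm j : ℝ) : ℂ) else 0)
             (Matrix.diagonal fun j => (C j : ℂ))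
         let Udil := fromBlocks W 0 0 W₂ * M * fromBlocks Qᴴ 0 0 Q₂ᴴ
         Udil ∈ Matrix.unitaryGroup (Fin n ⊕ Fin (n - r)) ℂ ∧ Udil.toBlocks₁₁ = A) := by
  classical
  have hA : (Aᴴ * A).IsHermitian := Matrix.isHermitian_conjTranspose_mul_self A
  obtain ⟨e, he⟩ := exists_perm_sorted (fun j => Real.sqrt (hA.eigenvalues j))
  have hσe : ∀ i, σ i = Real.sqrt (hA.eigenvalues (e i)) := by
    intro i
    rw [hσ]
    exact he i
  have hμ : ∀ i, 0 ≤ hA.eigenvalues i := by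
    open scoped ComplexOrder in
    exact (Matrix.posSemidef_conjTranspose_mul_self A).eigenvalues_nonneg
  have hσ0 : ∀ i, 0 ≤ σ i := fun i => by rw [hσe i]; exact Real.sqrt_nonneg _
  have hsq : ∀ i, σ i ^ 2 = hA.eigenvalues (e i) := fun i => by
    rw [hσe i]; exact Real.sq_sqrt (hμ _)
  obtain ⟨Q, hQunit, hQconj⟩ := exists_Q (Aᴴ * A) hA e
  have hBB : (A * Q)ᴴ * (A * Q) = Matrix.diagonal (fun i => ((σ i : ℂ))^2) := by
    rw [Matrix.conjTranspose_mul]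
    have hassoc : Qᴴ * Aᴴ * (A * Q) = Qᴴ * (Aᴴ * A) * Q := by
      simp only [mul_assoc]
    rw [hassoc, hQconj]
    have hfe : (fun i => ((hA.eigenvalues (e i) : ℝ) : ℂ)) = fun i => ((σ i : ℂ))^2 := by
      funext i
      rw [← hsq i]
      push_cast
      ring
    rw [hfe]
  obtain ⟨W, hWunit, hWeq⟩ := exists_unitary_factor (A * Q) σ hBB
  have hQQ : Q * Qᴴ = 1 := by
    simpa [Matrix.star_eq_conjTranspose] using Matrix.mem_unitaryGroup_iff.mp hQunit
  have hAeq : A = W * Matrix.diagonal (fun i => (σ i : ℂ)) * Qᴴ := by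
    calc A = A * (Q * Qᴴ) := by rw [hQQ, mul_one]
    _ = (A * Q) * Qᴴ := by rw [mul_assoc]
    _ = W * Matrix.diagonal (fun i => (σ i : ℂ)) * Qᴴ := by rw [hWeq]
  have hQHunit : Qᴴ ∈ Matrix.unitaryGroup (Fin n) ℂ := by
    rw [← Matrix.star_eq_conjTranspose]
    exact Unitary.star_mem hQunit
  refine ⟨W, Q, hWunit, hQunit, hAeq, 1, 1, Submonoid.one_mem _, Submonoid.one_mem _, ?_⟩
  dsimp only
  constructor
  · refine Submonoid.mul_mem _ (Submonoid.mul_mem _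
      (fromBlocks_diag_mem_unitary hWunit (Submonoid.one_mem _)) ?_) ?_
    · exact M_mem_unitary σ _ _ (fun j => rfl) (fun j => rfl) h1
        (fun j => hσ0 _)
        (fun j => le_of_lt (h2 ⟨r + (j : ℕ), by have := j.isLt; omega⟩ (by simp)))
    · rw [Matrix.conjTranspose_one]
      exact fromBlocks_diag_mem_unitary hQHunit (Submonoid.one_mem _)
  · rw [Matrix.fromBlocks_multiply, Matrix.fromBlocks_multiply, Matrix.toBlocks_fromBlocks₁₁]
    simp only [Matrix.mul_zero, Matrix.zero_mul, Matrix.mul_one, Matrix.one_mul,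
      add_zero, zero_add]
    exact hAeq.symm
end
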